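/- arXiv:0803.1021 — 3 statements merged into one kernel-verified Lean document; each statement's English description precedes it below -/
import Mathlib

section
/- Let u ∈ C_c^∞(ℝ^{2n+1}) be a smooth compactly supported function on the Heisenberg group ℍ^n. Then ∫_{ℝ^{2n+1}} ‖∇²_H u‖² dg = ∫_{ℝ^{2n+1}} (Δ_H u)² dg + (3/2) n ∫_{ℝ^{2n+1}} (Tu)² dg, where dg denotes Lebesgue measure. -/
open scoped BigOperators
noncomputable section

/-- The Heisenberg group ℍⁿ identified with ℝⁿ × ℝⁿ × ℝ, with coordinates (x, y, t). -/
abbrev Heis (n : ℕ) : Type := (Fin n → ℝ) × (Fin n → ℝ) × ℝ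

/-- The left-invariant horizontal vector fields `X_1, …, X_{2n}` acting on functions:
`X_j u = ∂u/∂x_j − (y_j/2) ∂u/∂t` for `j = 1,…,n` (indices `0,…,n-1` here) and
`X_{n+j} u = ∂u/∂y_j + (x_j/2) ∂u/∂t` (indices `n,…,2n-1`). -/
noncomputable def Xf (n : ℕ) (i : Fin (2 * n)) (u : Heis n → ℝ) (p : Heis n) : ℝ :=
  if h : (i : ℕ) < n then
    fderiv ℝ u p (Pi.single ⟨(i : ℕ), h⟩ 1, 0, 0)
      - p.2.1 ⟨(i : ℕ), h⟩ / 2 * fderiv ℝ u p (0, 0, 1)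
  else
    fderiv ℝ u p (0, Pi.single ⟨(i : ℕ) - n, by have := i.isLt; omega⟩ 1, 0)
      + p.1 ⟨(i : ℕ) - n, by have := i.isLt; omega⟩ / 2 * fderiv ℝ u p (0, 0, 1)

/-- The vertical vector field `T u = ∂u/∂t`. -/
noncomputable def Tf (n : ℕ) (u : Heis n → ℝ) (p : Heis n) : ℝ :=
  fderiv ℝ u p (0, 0, 1)

/-- The horizontal Laplacian `Δ_H u = Σ_{i=1}^{2n} X_i (X_i u)`. -/
noncomputable def ΔH (n : ℕ) (u : Heis n → ℝ) (p : Heis n) : ℝ :=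
  ∑ i : Fin (2 * n), Xf n i (Xf n i u) p

open MeasureTheory

namespace HeisAux

instance heisHaar0 (n : ℕ) : (volume : Measure ((Fin n → ℝ) × ℝ)).IsAddHaarMeasure :=
  Measure.prod.instIsAddHaarMeasure _ _

instance heisHaar (n : ℕ) : (volume : Measure (Heis n)).IsAddHaarMeasure :=
  Measure.prod.instIsAddHaarMeasure _ _

lemma two_le_top : (2 : WithTop ℕ∞) ≤ ((⊤ : ℕ∞) : WithTop ℕ∞) := by
  have : ((2 : ℕ∞) : WithTop ℕ∞) ≤ ((⊤ : ℕ∞) : WithTop ℕ∞) := WithTop.coe_le_coe.2 le_top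
  simpa using this

lemma one_le_top : ((⊤ : ℕ∞) : WithTop ℕ∞) ≠ 0 := by
  simp

lemma top_add_one : ((⊤ : ℕ∞) : WithTop ℕ∞) + 1 ≤ ((⊤ : ℕ∞) : WithTop ℕ∞) := by
  exact_mod_cast le_top

variable {n : ℕ}

/-- Constant direction of the vector field `X_i`. -/
def dir (n : ℕ) (i : Fin (2 * n)) : Heis n :=
  if h : (i : ℕ) < n then (Pi.single ⟨(i : ℕ), h⟩ 1, 0, 0)
  else (0, Pi.single ⟨(i : ℕ) - n, by have := i.isLt; omega⟩ 1, 0)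

/-- The (linear) coefficient of `∂/∂t` in the vector field `X_i`. -/
def coeff (n : ℕ) (i : Fin (2 * n)) : Heis n →L[ℝ] ℝ :=
  if h : (i : ℕ) < n then
    (-(1 : ℝ)/2) • ((ContinuousLinearMap.proj (R := ℝ) (φ := fun _ : Fin n => ℝ)
        ⟨(i : ℕ), h⟩).comp
      ((ContinuousLinearMap.fst ℝ (Fin n → ℝ) ℝ).comp
        (ContinuousLinearMap.snd ℝ (Fin n → ℝ) ((Fin n → ℝ) × ℝ))))
  else
    ((1 : ℝ)/2) • ((ContinuousLinearMap.proj (R := ℝ) (φ := fun _ : Fin n => ℝ)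
        ⟨(i : ℕ) - n, by have := i.isLt; omega⟩).comp
      (ContinuousLinearMap.fst ℝ (Fin n → ℝ) ((Fin n → ℝ) × ℝ)))

def et (n : ℕ) : Heis n := (0, 0, 1)

lemma Xf_eq (i : Fin (2 * n)) (u : Heis n → ℝ) (p : Heis n) :
    Xf n i u p = fderiv ℝ u p (dir n i) + coeff n i p * fderiv ℝ u p (et n) := by
  unfold Xf dir coeff et
  split_ifs with h
  · simp only [ContinuousLinearMap.coe_smul', Pi.smul_apply, ContinuousLinearMap.coe_comp',
      Function.comp_apply, ContinuousLinearMap.coe_snd', ContinuousLinearMap.coe_fst',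
      ContinuousLinearMap.proj_apply, smul_eq_mul]
    ring
  · simp only [ContinuousLinearMap.coe_smul', Pi.smul_apply, ContinuousLinearMap.coe_comp',
      Function.comp_apply, ContinuousLinearMap.coe_fst',
      ContinuousLinearMap.proj_apply, smul_eq_mul]
    ring

lemma coeff_et (i : Fin (2 * n)) : coeff n i (et n) = 0 := by
  unfold coeff et
  split_ifs with h <;> simp

/-- The structure constant of the commutator `[X_i, X_j] = eps i j · T`. -/
def eps (n : ℕ) (i j : Fin (2 * n)) : ℝ := coeff n j (dir n i) - coeff n i (dir n j)

lemma eps_antisymm (i j : Fin (2 * n)) : eps n j i = - eps n i j := by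
  unfold eps; ring

lemma eps_eq (i j : Fin (2 * n)) :
    eps n i j = (if (i : ℕ) + n = (j : ℕ) then (1 : ℝ) else 0)
      - (if (j : ℕ) + n = (i : ℕ) then (1 : ℝ) else 0) := by
  have hi2 := i.isLt
  have hj2 := j.isLt
  unfold eps coeff dir
  rcases lt_or_ge ((i : ℕ)) n with hi | hi <;> rcases lt_or_ge ((j : ℕ)) n with hj | hj
  · have h1 : ¬((i : ℕ) + n = (j : ℕ)) := by omega
    have h2 : ¬((j : ℕ) + n = (i : ℕ)) := by omega
    simp [hi, hj, h1, h2]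
  · have h2 : ¬((j : ℕ) + n = (i : ℕ)) := by omega
    simp only [dif_pos hi, dif_neg (not_lt.2 hj), ContinuousLinearMap.coe_smul', Pi.smul_apply,
      ContinuousLinearMap.coe_comp', Function.comp_apply, ContinuousLinearMap.coe_snd',
      ContinuousLinearMap.coe_fst', ContinuousLinearMap.proj_apply, smul_eq_mul,
      Pi.single_apply, h2, if_false]
    by_cases hij : (i : ℕ) + n = (j : ℕ)
    · rw [if_pos (show (⟨(j:ℕ) - n, by omega⟩ : Fin n) = ⟨(i:ℕ), hi⟩ by
          apply Fin.ext; simp; omega),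
        if_pos (show (⟨(i:ℕ), hi⟩ : Fin n) = ⟨(j:ℕ) - n, by omega⟩ by
          apply Fin.ext; simp; omega),
        if_pos hij]
      norm_num
    · rw [if_neg (fun h => hij (by have := congrArg Fin.val h; simp at this; omega)),
        if_neg (fun h => hij (by have := congrArg Fin.val h; simp at this; omega)),
        if_neg hij]
      norm_num
  · have h1 : ¬((i : ℕ) + n = (j : ℕ)) := by omega
    simp only [dif_neg (not_lt.2 hi), dif_pos hj, ContinuousLinearMap.coe_smul', Pi.smul_apply,
      ContinuousLinearMap.coe_comp', Function.comp_apply, ContinuousLinearMap.coe_snd',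
      ContinuousLinearMap.coe_fst', ContinuousLinearMap.proj_apply, smul_eq_mul,
      Pi.single_apply, h1, if_false]
    by_cases hij : (j : ℕ) + n = (i : ℕ)
    · rw [if_pos (show (⟨(i:ℕ) - n, by omega⟩ : Fin n) = ⟨(j:ℕ), hj⟩ by
          apply Fin.ext; simp; omega),
        if_pos (show (⟨(j:ℕ), hj⟩ : Fin n) = ⟨(i:ℕ) - n, by omega⟩ by
          apply Fin.ext; simp; omega),
        if_pos hij]
      norm_num
    · rw [if_neg (fun h => hij (by have := congrArg Fin.val h; simp at this; omega)),
        if_neg (fun h => hij (by have := congrArg Fin.val h; simp at this; omega)),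
        if_neg hij]
      norm_num
  · have h1 : ¬((i : ℕ) + n = (j : ℕ)) := by omega
    have h2 : ¬((j : ℕ) + n = (i : ℕ)) := by omega
    simp only [dif_neg (not_lt.2 hi), dif_neg (not_lt.2 hj), ContinuousLinearMap.coe_smul',
      Pi.smul_apply, ContinuousLinearMap.coe_comp', Function.comp_apply,
      ContinuousLinearMap.coe_fst', ContinuousLinearMap.proj_apply, smul_eq_mul, h1, h2,
      if_false]
    simp

lemma sum_eps_sq (i : Fin (2 * n)) : ∑ j : Fin (2 * n), eps n i j ^ 2 = 1 := by
  have hi2 := i.isLt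
  rcases lt_or_ge ((i : ℕ)) n with hi | hi
  · rw [Finset.sum_eq_single_of_mem (⟨(i : ℕ) + n, by omega⟩ : Fin (2 * n)) (Finset.mem_univ _)]
    · rw [eps_eq]
      rw [if_pos rfl, if_neg (by simp; omega)]
      norm_num
    · intro j _ hj
      rw [eps_eq]
      rw [if_neg (fun h => hj (by apply Fin.ext; simp [← h])), if_neg (by omega)]
      norm_num
  · rw [Finset.sum_eq_single_of_mem (⟨(i : ℕ) - n, by omega⟩ : Fin (2 * n)) (Finset.mem_univ _)]
    · rw [eps_eq]
      rw [if_neg (by simp; omega), if_pos (by simp; omega)]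
      norm_num
    · intro j _ hj
      rw [eps_eq]
      rw [if_neg (by omega), if_neg (fun h => hj (by apply Fin.ext; simp; omega))]
      norm_num

section Calculus

variable {u f g : Heis n → ℝ}

lemma contDiff_dapp (hu : ContDiff ℝ (⊤ : ℕ∞) u) (v : Heis n) :
    ContDiff ℝ (⊤ : ℕ∞) (fun p => fderiv ℝ u p v) :=
  (hu.fderiv_right top_add_one).clm_apply contDiff_const

lemma contDiff_Xf (hu : ContDiff ℝ (⊤ : ℕ∞) u) (i : Fin (2 * n)) :
    ContDiff ℝ (⊤ : ℕ∞) (Xf n i u) := by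
  have h : Xf n i u =
      fun p => fderiv ℝ u p (dir n i) + coeff n i p * fderiv ℝ u p (et n) :=
    funext (Xf_eq i u)
  rw [h]
  exact (contDiff_dapp hu (dir n i)).add
    (((coeff n i).contDiff).mul (contDiff_dapp hu (et n)))

lemma contDiff_Tf (hu : ContDiff ℝ (⊤ : ℕ∞) u) : ContDiff ℝ (⊤ : ℕ∞) (Tf n u) :=
  contDiff_dapp hu (0, 0, 1)

lemma hcs_Xf (hc : HasCompactSupport u) (i : Fin (2 * n)) :
    HasCompactSupport (Xf n i u) := by
  have h : Xf n i u =
      (fun p => fderiv ℝ u p (dir n i))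
        + (fun p => (coeff n i p : ℝ)) * (fun p => fderiv ℝ u p (et n)) :=
    funext (Xf_eq i u)
  rw [h]
  exact (hc.fderiv_apply ℝ _).add ((hc.fderiv_apply ℝ _).mul_left)

lemma hcs_Tf (hc : HasCompactSupport u) : HasCompactSupport (Tf n u) :=
  hc.fderiv_apply ℝ _

lemma intg (hf : Continuous f) (hg : Continuous g) (hcf : HasCompactSupport f) :
    Integrable (fun p => f p * g p) :=
  (hf.mul hg).integrable_of_hasCompactSupport hcf.mul_right

lemma integral_fderiv_eq_zero (hu : ContDiff ℝ (⊤ : ℕ∞) u) (hc : HasCompactSupport u)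
    (v : Heis n) : ∫ p : Heis n, fderiv ℝ u p v = 0 := by
  have h := integral_mul_fderiv_eq_neg_fderiv_mul_of_integrable (μ := volume)
    (f := fun _ : Heis n => (1 : ℝ)) (g := u) (v := v)
    (by simp only [fderiv_fun_const, Pi.zero_apply, ContinuousLinearMap.zero_apply, zero_mul]
        exact integrable_zero _ _ _)
    (by simp only [one_mul]
        exact ((contDiff_dapp hu v).continuous).integrable_of_hasCompactSupport
          (hc.fderiv_apply ℝ v))
    (by simpa using hu.continuous.integrable_of_hasCompactSupport hc)
    (fun x _ => differentiable_const (1 : ℝ) x) (fun x _ => hu.differentiable one_le_top x)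
  simpa using h

lemma integral_Xf_eq_zero (hu : ContDiff ℝ (⊤ : ℕ∞) u) (hc : HasCompactSupport u)
    (i : Fin (2 * n)) : ∫ p : Heis n, Xf n i u p = 0 := by
  have hmul : ∀ p : Heis n, fderiv ℝ (fun q => coeff n i q * u q) p (et n)
      = coeff n i p * fderiv ℝ u p (et n) := by
    intro p
    rw [fderiv_fun_mul ((coeff n i).differentiableAt) ((hu.differentiable one_le_top) p)]
    simp [ContinuousLinearMap.fderiv, coeff_et]
  have h : (fun p : Heis n => Xf n i u p)
      = fun p => fderiv ℝ u p (dir n i) + fderiv ℝ (fun q => coeff n i q * u q) p (et n) := by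
    funext p; rw [Xf_eq, hmul p]
  have hcu : ContDiff ℝ (⊤ : ℕ∞) (fun q : Heis n => coeff n i q * u q) :=
    ((coeff n i).contDiff).mul hu
  have hccu : HasCompactSupport (fun q : Heis n => coeff n i q * u q) := hc.mul_left
  rw [h, integral_add
    (((contDiff_dapp hu (dir n i)).continuous).integrable_of_hasCompactSupport
      (hc.fderiv_apply ℝ _))
    (((contDiff_dapp hcu (et n)).continuous).integrable_of_hasCompactSupport
      (hccu.fderiv_apply ℝ _)),
    integral_fderiv_eq_zero hu hc, integral_fderiv_eq_zero hcu hccu]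
  norm_num

lemma Xf_mul (hf : Differentiable ℝ f) (hg : Differentiable ℝ g) (i : Fin (2 * n))
    (p : Heis n) :
    Xf n i (fun q => f q * g q) p = Xf n i f p * g p + f p * Xf n i g p := by
  have hm : fderiv ℝ (fun q => f q * g q) p
      = f p • fderiv ℝ g p + g p • fderiv ℝ f p := fderiv_mul (hf p) (hg p)
  simp only [Xf_eq, hm, ContinuousLinearMap.add_apply, ContinuousLinearMap.coe_smul',
    Pi.smul_apply, smul_eq_mul]
  ring

lemma integral_Xf_mul (hf : ContDiff ℝ (⊤ : ℕ∞) f) (hg : ContDiff ℝ (⊤ : ℕ∞) g)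
    (hcf : HasCompactSupport f) (hcg : HasCompactSupport g) (i : Fin (2 * n)) :
    ∫ p : Heis n, Xf n i f p * g p = - ∫ p : Heis n, f p * Xf n i g p := by
  have h0 : ∫ p : Heis n, Xf n i (fun q => f q * g q) p = 0 :=
    integral_Xf_eq_zero (hf.mul hg) (hcf.mul_right) i
  have h1 : (fun p : Heis n => Xf n i (fun q => f q * g q) p)
      = fun p => Xf n i f p * g p + f p * Xf n i g p :=
    funext (Xf_mul (hf.differentiable one_le_top) (hg.differentiable one_le_top) i)
  rw [h1] at h0
  rw [integral_add
    (intg (contDiff_Xf hf i).continuous hg.continuous (hcs_Xf hcf i))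
    (intg hf.continuous (contDiff_Xf hg i).continuous hcf)] at h0
  linarith

/-- second derivative as fderiv of fderiv -/
lemma fderiv_dapp_eq (hu : ContDiff ℝ (⊤ : ℕ∞) u) (v p w : Heis n) :
    fderiv ℝ (fun q => fderiv ℝ u q v) p w = fderiv ℝ (fderiv ℝ u) p w v := by
  have hD : DifferentiableAt ℝ (fderiv ℝ u) p :=
    ((hu.fderiv_right top_add_one).differentiable one_le_top) p
  rw [fderiv_clm_apply hD (differentiableAt_const v)]
  simp

lemma sym (hu : ContDiff ℝ (⊤ : ℕ∞) u) (p v w : Heis n) :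
    fderiv ℝ (fun q => fderiv ℝ u q v) p w = fderiv ℝ (fun q => fderiv ℝ u q w) p v := by
  rw [fderiv_dapp_eq hu v p w, fderiv_dapp_eq hu w p v]
  exact (hu.contDiffAt.isSymmSndFDerivAt (by rw [minSmoothness_of_isRCLikeNormedField]; exact two_le_top)) w v

lemma fderiv_Xf (hu : ContDiff ℝ (⊤ : ℕ∞) u) (i : Fin (2 * n)) (p w : Heis n) :
    fderiv ℝ (Xf n i u) p w
      = fderiv ℝ (fun q => fderiv ℝ u q (dir n i)) p w
        + coeff n i w * fderiv ℝ u p (et n)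
        + coeff n i p * fderiv ℝ (fun q => fderiv ℝ u q (et n)) p w := by
  have h1 : DifferentiableAt ℝ (fun q => fderiv ℝ u q (dir n i)) p :=
    ((contDiff_dapp hu (dir n i)).differentiable one_le_top) p
  have h2 : DifferentiableAt ℝ (fun q => fderiv ℝ u q (et n)) p :=
    ((contDiff_dapp hu (et n)).differentiable one_le_top) p
  have hXfu : Xf n i u
      = fun q => fderiv ℝ u q (dir n i) + coeff n i q * fderiv ℝ u q (et n) :=
    funext (Xf_eq i u)
  rw [hXfu, fderiv_fun_add (g := fun q => coeff n i q * fderiv ℝ u q (et n)) h1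
      (((coeff n i).differentiableAt).mul h2),
    fderiv_fun_mul ((coeff n i).differentiableAt) h2]
  simp only [ContinuousLinearMap.fderiv, ContinuousLinearMap.add_apply,
    ContinuousLinearMap.coe_smul', Pi.smul_apply, smul_eq_mul]
  ring

lemma Xf_Xf (hu : ContDiff ℝ (⊤ : ℕ∞) u) (i j : Fin (2 * n)) (p : Heis n) :
    Xf n i (Xf n j u) p
      = fderiv ℝ (fun q => fderiv ℝ u q (dir n j)) p (dir n i)
        + coeff n j (dir n i) * fderiv ℝ u p (et n)
        + coeff n j p * fderiv ℝ (fun q => fderiv ℝ u q (et n)) p (dir n i)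
        + coeff n i p * fderiv ℝ (fun q => fderiv ℝ u q (dir n j)) p (et n)
        + coeff n i p * (coeff n j p
            * fderiv ℝ (fun q => fderiv ℝ u q (et n)) p (et n)) := by
  rw [Xf_eq i (Xf n j u) p, fderiv_Xf hu j p (dir n i), fderiv_Xf hu j p (et n), coeff_et]
  ring

lemma Xf_comm (hu : ContDiff ℝ (⊤ : ℕ∞) u) (i j : Fin (2 * n)) (p : Heis n) :
    Xf n i (Xf n j u) p = Xf n j (Xf n i u) p + eps n i j * Tf n u p := by
  have hT : Tf n u p = fderiv ℝ u p (et n) := rfl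
  rw [Xf_Xf hu i j p, Xf_Xf hu j i p, hT,
    sym hu p (dir n j) (dir n i), sym hu p (et n) (dir n i), sym hu p (et n) (dir n j)]
  unfold eps
  ring

lemma Tf_Xf (hu : ContDiff ℝ (⊤ : ℕ∞) u) (i : Fin (2 * n)) (p : Heis n) :
    Tf n (Xf n i u) p = Xf n i (Tf n u) p := by
  have hT : Tf n u = fun q => fderiv ℝ u q (et n) := rfl
  have h1 : Tf n (Xf n i u) p = fderiv ℝ (Xf n i u) p (et n) := rfl
  rw [h1, fderiv_Xf hu i p (et n), coeff_et, hT,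
    Xf_eq i (fun q => fderiv ℝ u q (et n)) p, sym hu p (et n) (dir n i)]
  ring

lemma sum_eps_Xf (hu : ContDiff ℝ (⊤ : ℕ∞) u) (p : Heis n) :
    ∑ i : Fin (2 * n), ∑ j : Fin (2 * n), eps n i j * Xf n i (Xf n j u) p
      = n * Tf n u p := by
  set S := ∑ i : Fin (2 * n), ∑ j : Fin (2 * n), eps n i j * Xf n i (Xf n j u) p with hS
  have h2 : S = (∑ i : Fin (2 * n), ∑ j : Fin (2 * n), eps n i j * Xf n j (Xf n i u) p)
      + (∑ i : Fin (2 * n), ∑ j : Fin (2 * n), eps n i j ^ 2) * Tf n u p := by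
    rw [hS, Finset.sum_mul, ← Finset.sum_add_distrib]
    refine Finset.sum_congr rfl fun i _ => ?_
    rw [Finset.sum_mul, ← Finset.sum_add_distrib]
    refine Finset.sum_congr rfl fun j _ => ?_
    rw [Xf_comm hu i j p]
    ring
  have h3 : (∑ i : Fin (2 * n), ∑ j : Fin (2 * n), eps n i j * Xf n j (Xf n i u) p)
      = -S := by
    rw [Finset.sum_comm, hS, ← Finset.sum_neg_distrib]
    refine Finset.sum_congr rfl fun i _ => ?_
    rw [← Finset.sum_neg_distrib]
    refine Finset.sum_congr rfl fun j _ => ?_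
    rw [eps_antisymm]
    ring
  have h4 : (∑ i : Fin (2 * n), ∑ j : Fin (2 * n), eps n i j ^ 2) = 2 * (n : ℝ) := by
    rw [Finset.sum_congr rfl fun i _ => sum_eps_sq i, Finset.sum_const, Finset.card_univ,
      Fintype.card_fin, nsmul_eq_mul, mul_one]
    push_cast
    ring
  rw [h3, h4] at h2
  have : 2 * S = 2 * n * Tf n u p := by linarith
  linarith

end Calculus

end HeisAux

open HeisAux

/-- For u ∈ C_c^∞(ℍⁿ):
∫ ‖∇²_H u‖² = ∫ (Δ_H u)² + (3/2) n ∫ (Tu)². -/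
theorem heisenberg_global_hessian_identity (n : ℕ) (u : Heis n → ℝ)
    (hu : ContDiff ℝ (⊤ : ℕ∞) u) (hc : HasCompactSupport u) :
    ∫ p : Heis n, ∑ i : Fin (2 * n), ∑ j : Fin (2 * n),
        ((Xf n i (Xf n j u) p + Xf n j (Xf n i u) p) / 2) ^ 2
      = (∫ p : Heis n, (ΔH n u p) ^ 2)
        + (3 / 2) * n * ∫ p : Heis n, (Tf n u p) ^ 2 := by
  classical
  -- regularity bookkeeping
  have hsm : ∀ i j : Fin (2 * n), ContDiff ℝ (⊤ : ℕ∞) (Xf n i (Xf n j u)) :=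
    fun i j => contDiff_Xf (contDiff_Xf hu j) i
  have hsp : ∀ i j : Fin (2 * n), HasCompactSupport (Xf n i (Xf n j u)) :=
    fun i j => hcs_Xf (hcs_Xf hc j) i
  have hint : ∀ i j k l : Fin (2 * n),
      Integrable (fun p : Heis n => Xf n i (Xf n j u) p * Xf n k (Xf n l u) p) :=
    fun i j k l => intg (hsm i j).continuous (hsm k l).continuous (hsp i j)
  have hintT : ∀ i j : Fin (2 * n),
      Integrable (fun p : Heis n => Xf n i (Xf n j u) p * Tf n u p) :=
    fun i j => intg (hsm i j).continuous (contDiff_Tf hu).continuous (hsp i j)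
  -- first integral identity
  have I1 : ∀ i j : Fin (2 * n),
      ∫ p : Heis n, Xf n i (Xf n j u) p * Xf n j (Xf n i u) p
        = (∫ p : Heis n, Xf n j (Xf n j u) p * Xf n i (Xf n i u) p)
          + eps n i j * ∫ p : Heis n, Xf n i (Xf n j u) p * Tf n u p := by
    intro i j
    have e1 : ∫ p : Heis n, Xf n i (Xf n j u) p * Xf n j (Xf n i u) p
        = - ∫ p : Heis n, Xf n j u p * Xf n i (Xf n j (Xf n i u)) p :=
      integral_Xf_mul (contDiff_Xf hu j) (hsm j i) (hcs_Xf hc j) (hsp j i) i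
    have e2 : (fun p : Heis n => Xf n j u p * Xf n i (Xf n j (Xf n i u)) p)
        = fun p => Xf n j u p * Xf n j (Xf n i (Xf n i u)) p
            + eps n i j * (Xf n j u p * Xf n i (Tf n u) p) := by
      funext p
      rw [Xf_comm (contDiff_Xf hu i) i j p, Tf_Xf hu i p]
      ring
    have e3 : ∫ p : Heis n, Xf n j u p * Xf n i (Xf n j (Xf n i u)) p
        = (∫ p : Heis n, Xf n j u p * Xf n j (Xf n i (Xf n i u)) p)
          + eps n i j * ∫ p : Heis n, Xf n j u p * Xf n i (Tf n u) p := by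
      rw [e2, integral_add
        (intg (contDiff_Xf hu j).continuous (contDiff_Xf (hsm i i) j).continuous
          (hcs_Xf hc j))
        ((intg (contDiff_Xf hu j).continuous (contDiff_Xf (contDiff_Tf hu) i).continuous
          (hcs_Xf hc j)).const_mul _), integral_const_mul]
    have e4 : ∫ p : Heis n, Xf n j (Xf n j u) p * Xf n i (Xf n i u) p
        = - ∫ p : Heis n, Xf n j u p * Xf n j (Xf n i (Xf n i u)) p :=
      integral_Xf_mul (contDiff_Xf hu j) (hsm i i) (hcs_Xf hc j) (hsp i i) j
    have e5 : ∫ p : Heis n, Xf n i (Xf n j u) p * Tf n u p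
        = - ∫ p : Heis n, Xf n j u p * Xf n i (Tf n u) p :=
      integral_Xf_mul (contDiff_Xf hu j) (contDiff_Tf hu) (hcs_Xf hc j) (hcs_Tf hc) i
    have hB : ∫ p : Heis n, Xf n j u p * Xf n j (Xf n i (Xf n i u)) p
        = - ∫ p : Heis n, Xf n j (Xf n j u) p * Xf n i (Xf n i u) p := by linarith
    have hC : ∫ p : Heis n, Xf n j u p * Xf n i (Tf n u) p
        = - ∫ p : Heis n, Xf n i (Xf n j u) p * Tf n u p := by linarith
    rw [e1, e3, hB, hC]
    ring
  -- second integral identity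
  have I2 : ∀ i j : Fin (2 * n),
      ∫ p : Heis n, Xf n i (Xf n j u) p * Xf n i (Xf n j u) p
        = (∫ p : Heis n, Xf n j (Xf n j u) p * Xf n i (Xf n i u) p)
          + 2 * eps n i j * ∫ p : Heis n, Xf n i (Xf n j u) p * Tf n u p := by
    intro i j
    have e1 : ∫ p : Heis n, Xf n i (Xf n j u) p * Xf n i (Xf n j u) p
        = - ∫ p : Heis n, Xf n j u p * Xf n i (Xf n i (Xf n j u)) p :=
      integral_Xf_mul (contDiff_Xf hu j) (hsm i j) (hcs_Xf hc j) (hsp i j) i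
    have hd1 : Differentiable ℝ (Xf n j (Xf n i u)) :=
      (contDiff_Xf (contDiff_Xf hu i) j).differentiable one_le_top
    have hd2 : Differentiable ℝ (Tf n u) :=
      (contDiff_Tf hu).differentiable one_le_top
    have hadd : ∀ (a b : Heis n → ℝ), Differentiable ℝ a → Differentiable ℝ b →
        ∀ q, Xf n i (fun r => a r + b r) q = Xf n i a q + Xf n i b q := by
      intro a b ha hb q
      simp only [Xf_eq]
      rw [fderiv_fun_add (ha q) (hb q)]
      simp only [ContinuousLinearMap.add_apply]
      ring
    have hsmul : ∀ (c : ℝ) (b : Heis n → ℝ), Differentiable ℝ b →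
        ∀ q, Xf n i (fun r => c * b r) q = c * Xf n i b q := by
      intro c b hb q
      simp only [Xf_eq]
      rw [fderiv_const_mul (hb q) c]
      simp only [ContinuousLinearMap.coe_smul', Pi.smul_apply, smul_eq_mul]
      ring
    have e2 : (fun p : Heis n => Xf n j u p * Xf n i (Xf n i (Xf n j u)) p)
        = fun p => Xf n j u p * Xf n j (Xf n i (Xf n i u)) p
            + 2 * eps n i j * (Xf n j u p * Xf n i (Tf n u) p) := by
      funext p
      have hXfij : Xf n i (Xf n j u)
          = fun q => Xf n j (Xf n i u) q + eps n i j * Tf n u q :=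
        funext (Xf_comm hu i j)
      rw [hXfij,
        hadd (fun q => Xf n j (Xf n i u) q) (fun q => eps n i j * Tf n u q)
          hd1 (hd2.const_mul _) p,
        hsmul (eps n i j) (Tf n u) hd2 p,
        Xf_comm (contDiff_Xf hu i) i j p, Tf_Xf hu i p]
      ring
    have e3 : ∫ p : Heis n, Xf n j u p * Xf n i (Xf n i (Xf n j u)) p
        = (∫ p : Heis n, Xf n j u p * Xf n j (Xf n i (Xf n i u)) p)
          + 2 * eps n i j * ∫ p : Heis n, Xf n j u p * Xf n i (Tf n u) p := by
      rw [e2, integral_add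
        (intg (contDiff_Xf hu j).continuous (contDiff_Xf (hsm i i) j).continuous
          (hcs_Xf hc j))
        ((intg (contDiff_Xf hu j).continuous (contDiff_Xf (contDiff_Tf hu) i).continuous
          (hcs_Xf hc j)).const_mul _), integral_const_mul]
    have e4 : ∫ p : Heis n, Xf n j (Xf n j u) p * Xf n i (Xf n i u) p
        = - ∫ p : Heis n, Xf n j u p * Xf n j (Xf n i (Xf n i u)) p :=
      integral_Xf_mul (contDiff_Xf hu j) (hsm i i) (hcs_Xf hc j) (hsp i i) j
    have e5 : ∫ p : Heis n, Xf n i (Xf n j u) p * Tf n u p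
        = - ∫ p : Heis n, Xf n j u p * Xf n i (Tf n u) p :=
      integral_Xf_mul (contDiff_Xf hu j) (contDiff_Tf hu) (hcs_Xf hc j) (hcs_Tf hc) i
    have hB : ∫ p : Heis n, Xf n j u p * Xf n j (Xf n i (Xf n i u)) p
        = - ∫ p : Heis n, Xf n j (Xf n j u) p * Xf n i (Xf n i u) p := by linarith
    have hC : ∫ p : Heis n, Xf n j u p * Xf n i (Tf n u) p
        = - ∫ p : Heis n, Xf n i (Xf n j u) p * Tf n u p := by linarith
    rw [e1, e3, hB, hC]
    ring
  -- expand the square and split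
  have hsqint : ∀ i j : Fin (2 * n), Integrable
      (fun p : Heis n => ((Xf n i (Xf n j u) p + Xf n j (Xf n i u) p) / 2) ^ 2) := by
    intro i j
    apply Continuous.integrable_of_hasCompactSupport
    · exact (((hsm i j).continuous.add (hsm j i).continuous).div_const 2).pow 2
    · exact ((hsp i j).add (hsp j i)).comp_left (g := fun z : ℝ => (z / 2) ^ 2) (by norm_num)
  have hsq : ∀ i j : Fin (2 * n),
      ∫ p : Heis n, ((Xf n i (Xf n j u) p + Xf n j (Xf n i u) p) / 2) ^ 2
        = (1/4) * (∫ p : Heis n, Xf n i (Xf n j u) p * Xf n i (Xf n j u) p)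
          + (1/2) * (∫ p : Heis n, Xf n i (Xf n j u) p * Xf n j (Xf n i u) p)
          + (1/4) * (∫ p : Heis n, Xf n j (Xf n i u) p * Xf n j (Xf n i u) p) := by
    intro i j
    have e : (fun p : Heis n => ((Xf n i (Xf n j u) p + Xf n j (Xf n i u) p) / 2) ^ 2)
        = fun p => (1/4) * (Xf n i (Xf n j u) p * Xf n i (Xf n j u) p)
            + ((1/2) * (Xf n i (Xf n j u) p * Xf n j (Xf n i u) p)
              + (1/4) * (Xf n j (Xf n i u) p * Xf n j (Xf n i u) p)) := by
      funext p; ring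
    have ia1 : Integrable (fun p : Heis n =>
        (1/2) * (Xf n i (Xf n j u) p * Xf n j (Xf n i u) p)
          + (1/4) * (Xf n j (Xf n i u) p * Xf n j (Xf n i u) p)) :=
      ((hint i j j i).const_mul _).add ((hint j i j i).const_mul _)
    rw [e, integral_add ((hint i j i j).const_mul _) ia1,
      integral_add ((hint i j j i).const_mul _) ((hint j i j i).const_mul _),
      integral_const_mul, integral_const_mul, integral_const_mul]
    ring
  have hswap : ∫ p : Heis n, ∑ i : Fin (2 * n), ∑ j : Fin (2 * n),
        ((Xf n i (Xf n j u) p + Xf n j (Xf n i u) p) / 2) ^ 2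
      = ∑ i : Fin (2 * n), ∑ j : Fin (2 * n),
          ∫ p : Heis n, ((Xf n i (Xf n j u) p + Xf n j (Xf n i u) p) / 2) ^ 2 := by
    rw [integral_finset_sum _ (fun i _ => integrable_finset_sum _ fun j _ => hsqint i j)]
    exact Finset.sum_congr rfl fun i _ => integral_finset_sum _ fun j _ => hsqint i j
  -- identify the Laplacian term
  have hQ : ∑ i : Fin (2 * n), ∑ j : Fin (2 * n),
        (∫ p : Heis n, Xf n j (Xf n j u) p * Xf n i (Xf n i u) p)
      = ∫ p : Heis n, (ΔH n u p) ^ 2 := by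
    have e : (fun p : Heis n => (ΔH n u p) ^ 2)
        = fun p => ∑ i : Fin (2 * n), ∑ j : Fin (2 * n),
            Xf n j (Xf n j u) p * Xf n i (Xf n i u) p := by
      funext p
      simp only [ΔH]
      rw [sq, Finset.sum_mul_sum, Finset.sum_comm]
    rw [e, integral_finset_sum _ (fun i _ => integrable_finset_sum _ fun j _ => hint j j i i)]
    exact (Finset.sum_congr rfl fun i _ =>
      integral_finset_sum _ fun j _ => hint j j i i).symm
  -- identify the T term
  have hR : ∑ i : Fin (2 * n), ∑ j : Fin (2 * n),
        eps n i j * (∫ p : Heis n, Xf n i (Xf n j u) p * Tf n u p)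
      = (n : ℝ) * ∫ p : Heis n, (Tf n u p) ^ 2 := by
    have e1 : ∀ i j : Fin (2 * n),
        eps n i j * (∫ p : Heis n, Xf n i (Xf n j u) p * Tf n u p)
          = ∫ p : Heis n, eps n i j * (Xf n i (Xf n j u) p * Tf n u p) :=
      fun i j => (integral_const_mul _ _).symm
    have e2 : (fun p : Heis n => ∑ i : Fin (2 * n), ∑ j : Fin (2 * n),
          eps n i j * (Xf n i (Xf n j u) p * Tf n u p))
        = fun p => (n : ℝ) * (Tf n u p) ^ 2 := by
      funext p
      have inner : ∀ i : Fin (2 * n), ∑ j : Fin (2 * n),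
          eps n i j * (Xf n i (Xf n j u) p * Tf n u p)
            = (∑ j : Fin (2 * n), eps n i j * Xf n i (Xf n j u) p) * Tf n u p := by
        intro i
        rw [Finset.sum_mul]
        exact Finset.sum_congr rfl fun j _ => (mul_assoc _ _ _).symm
      rw [Finset.sum_congr rfl fun i _ => inner i, ← Finset.sum_mul, sum_eps_Xf hu p]
      ring
    calc ∑ i : Fin (2 * n), ∑ j : Fin (2 * n),
          eps n i j * (∫ p : Heis n, Xf n i (Xf n j u) p * Tf n u p)
        = ∑ i : Fin (2 * n), ∑ j : Fin (2 * n),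
            ∫ p : Heis n, eps n i j * (Xf n i (Xf n j u) p * Tf n u p) := by
          exact Finset.sum_congr rfl fun i _ => Finset.sum_congr rfl fun j _ => e1 i j
      _ = ∫ p : Heis n, ∑ i : Fin (2 * n), ∑ j : Fin (2 * n),
            eps n i j * (Xf n i (Xf n j u) p * Tf n u p) := by
          rw [integral_finset_sum _ (fun i _ => integrable_finset_sum _
            (fun j _ => (hintT i j).const_mul _))]
          exact (Finset.sum_congr rfl fun i _ =>
            integral_finset_sum _ fun j _ => (hintT i j).const_mul _).symm
      _ = ∫ p : Heis n, (n : ℝ) * (Tf n u p) ^ 2 := by rw [e2]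
      _ = (n : ℝ) * ∫ p : Heis n, (Tf n u p) ^ 2 := integral_const_mul _ _
  -- final assembly
  rw [hswap]
  have step1 : ∑ i : Fin (2 * n), ∑ j : Fin (2 * n),
        ∫ p : Heis n, ((Xf n i (Xf n j u) p + Xf n j (Xf n i u) p) / 2) ^ 2
      = ∑ i : Fin (2 * n), ∑ j : Fin (2 * n),
          ((1/2) * (∫ p : Heis n, Xf n i (Xf n j u) p * Xf n i (Xf n j u) p)
            + (1/2) * (∫ p : Heis n, Xf n i (Xf n j u) p * Xf n j (Xf n i u) p)) := by
    have a1 : ∑ i : Fin (2 * n), ∑ j : Fin (2 * n),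
          (1/4 : ℝ) * (∫ p : Heis n, Xf n j (Xf n i u) p * Xf n j (Xf n i u) p)
        = ∑ i : Fin (2 * n), ∑ j : Fin (2 * n),
            (1/4 : ℝ) * (∫ p : Heis n, Xf n i (Xf n j u) p * Xf n i (Xf n j u) p) := by
      exact Finset.sum_comm
    calc ∑ i : Fin (2 * n), ∑ j : Fin (2 * n),
          ∫ p : Heis n, ((Xf n i (Xf n j u) p + Xf n j (Xf n i u) p) / 2) ^ 2
        = ∑ i : Fin (2 * n), ∑ j : Fin (2 * n),
            ((1/4) * (∫ p : Heis n, Xf n i (Xf n j u) p * Xf n i (Xf n j u) p)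
              + (1/2) * (∫ p : Heis n, Xf n i (Xf n j u) p * Xf n j (Xf n i u) p)
              + (1/4) * (∫ p : Heis n, Xf n j (Xf n i u) p * Xf n j (Xf n i u) p)) :=
          Finset.sum_congr rfl fun i _ => Finset.sum_congr rfl fun j _ => hsq i j
      _ = (∑ i : Fin (2 * n), ∑ j : Fin (2 * n),
            ((1/4) * (∫ p : Heis n, Xf n i (Xf n j u) p * Xf n i (Xf n j u) p)
              + (1/2) * (∫ p : Heis n, Xf n i (Xf n j u) p * Xf n j (Xf n i u) p)))
          + ∑ i : Fin (2 * n), ∑ j : Fin (2 * n),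
              (1/4) * (∫ p : Heis n, Xf n j (Xf n i u) p * Xf n j (Xf n i u) p) := by
          rw [← Finset.sum_add_distrib]
          exact Finset.sum_congr rfl fun i _ => by rw [← Finset.sum_add_distrib]
      _ = (∑ i : Fin (2 * n), ∑ j : Fin (2 * n),
            ((1/4) * (∫ p : Heis n, Xf n i (Xf n j u) p * Xf n i (Xf n j u) p)
              + (1/2) * (∫ p : Heis n, Xf n i (Xf n j u) p * Xf n j (Xf n i u) p)))
          + ∑ i : Fin (2 * n), ∑ j : Fin (2 * n),
              (1/4) * (∫ p : Heis n, Xf n i (Xf n j u) p * Xf n i (Xf n j u) p) := by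
          rw [a1]
      _ = ∑ i : Fin (2 * n), ∑ j : Fin (2 * n),
            ((1/2) * (∫ p : Heis n, Xf n i (Xf n j u) p * Xf n i (Xf n j u) p)
              + (1/2) * (∫ p : Heis n, Xf n i (Xf n j u) p * Xf n j (Xf n i u) p)) := by
          rw [← Finset.sum_add_distrib]
          refine Finset.sum_congr rfl fun i _ => ?_
          rw [← Finset.sum_add_distrib]
          refine Finset.sum_congr rfl fun j _ => ?_
          ring
  rw [step1]
  have step2 : ∑ i : Fin (2 * n), ∑ j : Fin (2 * n),
        ((1/2) * (∫ p : Heis n, Xf n i (Xf n j u) p * Xf n i (Xf n j u) p)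
          + (1/2) * (∫ p : Heis n, Xf n i (Xf n j u) p * Xf n j (Xf n i u) p))
      = ∑ i : Fin (2 * n), ∑ j : Fin (2 * n),
          ((∫ p : Heis n, Xf n j (Xf n j u) p * Xf n i (Xf n i u) p)
            + (3/2) * (eps n i j * ∫ p : Heis n, Xf n i (Xf n j u) p * Tf n u p)) := by
    refine Finset.sum_congr rfl fun i _ => Finset.sum_congr rfl fun j _ => ?_
    rw [I1 i j, I2 i j]
    ring
  rw [step2]
  have step3 : ∑ i : Fin (2 * n), ∑ j : Fin (2 * n),
        ((∫ p : Heis n, Xf n j (Xf n j u) p * Xf n i (Xf n i u) p)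
          + (3/2) * (eps n i j * ∫ p : Heis n, Xf n i (Xf n j u) p * Tf n u p))
      = (∑ i : Fin (2 * n), ∑ j : Fin (2 * n),
          (∫ p : Heis n, Xf n j (Xf n j u) p * Xf n i (Xf n i u) p))
        + (3/2) * ∑ i : Fin (2 * n), ∑ j : Fin (2 * n),
            (eps n i j * ∫ p : Heis n, Xf n i (Xf n j u) p * Tf n u p) := by
    rw [Finset.mul_sum, ← Finset.sum_add_distrib]
    refine Finset.sum_congr rfl fun i _ => ?_
    rw [Finset.mul_sum, ← Finset.sum_add_distrib]
  rw [step3, hQ, hR]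
  ring
end
end

section
/- Let u ∈ C_c^∞(ℝ^{2n+1}) be a smooth compactly supported function on the Heisenberg group ℍ^n. Then Σ_{i,j=1}^{2n} ∫_{ℝ^{2n+1}} (X_i(X_j u))² dg = ∫_{ℝ^{2n+1}} (Δ_H u)² dg + 2n ∫_{ℝ^{2n+1}} (Tu)² dg, where dg denotes Lebesgue measure. -/
open scoped BigOperators
noncomputable section

open MeasureTheory

set_option linter.unreachableTactic false
set_option linter.unusedTactic false

instance (n : ℕ) : Measure.IsAddHaarMeasure (volume : Measure ((Fin n → ℝ) × ℝ)) :=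
  Measure.prod.instIsAddHaarMeasure _ _

instance (n : ℕ) : Measure.IsAddHaarMeasure (volume : Measure (Heis n)) :=
  Measure.prod.instIsAddHaarMeasure _ _

variable {n : ℕ}

def Nice (f : Heis n → ℝ) : Prop := ContDiff ℝ (⊤:ℕ∞) f ∧ HasCompactSupport f

lemma Nice.integrable {f : Heis n → ℝ} (hf : Nice f) : Integrable f :=
  hf.1.continuous.integrable_of_hasCompactSupport hf.2

lemma Nice.mul {f g : Heis n → ℝ} (hf : Nice f) (hg : Nice g) :
    Nice (fun p => f p * g p) :=
  ⟨hf.1.mul hg.1, hf.2.mul_right⟩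

lemma integral_fd_zero {g : Heis n → ℝ} (hg : ContDiff ℝ (⊤:ℕ∞) g)
    (hc : HasCompactSupport g) (v : Heis n) : ∫ p : Heis n, fderiv ℝ g p v = 0 := by
  obtain ⟨C, hC⟩ := hg.lipschitzWith_of_hasCompactSupport hc (by norm_num)
  have h1 := (LipschitzWith.const' (1:ℝ) (K := 0)).integral_lineDeriv_mul_eq (μ := volume) hC hc v
  have h2 : ∀ p : Heis n, lineDeriv ℝ (fun _ : Heis n => (1:ℝ)) p v = 0 := by
    intro p; simp [lineDeriv]
  have h3 : ∀ p : Heis n, lineDeriv ℝ g p (-v) = - fderiv ℝ g p v := by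
    intro p
    rw [((hg.differentiable (by norm_num) p).hasFDerivAt.hasLineDerivAt (-v)).lineDeriv]
    simp
  simp only [h2, h3, zero_mul, mul_one, integral_zero] at h1
  rw [integral_neg] at h1
  linarith [h1]

/-- generic first-order operator -/
def op (v : Heis n) (ℓ : Heis n →L[ℝ] ℝ) (f : Heis n → ℝ) (p : Heis n) : ℝ :=
  fderiv ℝ f p v + ℓ p * fderiv ℝ f p (0, 0, 1)

lemma Nice.fd {f : Heis n → ℝ} (hf : Nice f) (w : Heis n) :
    Nice (fun p : Heis n => fderiv ℝ f p w) := by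
  have hfd : ContDiff ℝ (⊤:ℕ∞) (fderiv ℝ f) := hf.1.fderiv_right (by exact_mod_cast le_top)
  have hcfd : HasCompactSupport (fderiv ℝ f) := hf.2.fderiv ℝ
  exact ⟨hfd.clm_apply contDiff_const,
    hcfd.comp_left (g := fun L : Heis n →L[ℝ] ℝ => L w) rfl⟩

lemma Nice.op {f : Heis n → ℝ} (hf : Nice f) (v : Heis n) (ℓ : Heis n →L[ℝ] ℝ) :
    Nice (op v ℓ f) := by
  have hfd : ContDiff ℝ (⊤:ℕ∞) (fderiv ℝ f) := hf.1.fderiv_right (by exact_mod_cast le_top)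
  have hcfd : HasCompactSupport (fderiv ℝ f) := hf.2.fderiv ℝ
  constructor
  · exact ((hfd.clm_apply contDiff_const).add
      ((ℓ.contDiff).mul (hfd.clm_apply contDiff_const)))
  · have h1 : HasCompactSupport (fun p => fderiv ℝ f p v) :=
      hcfd.comp_left (g := fun L : Heis n →L[ℝ] ℝ => L v) rfl
    have h2 : HasCompactSupport (fun p => fderiv ℝ f p ((0,0,1) : Heis n)) :=
      hcfd.comp_left (g := fun L : Heis n →L[ℝ] ℝ => L (0,0,1)) rfl
    exact h1.add h2.mul_left

lemma op_integral_zero {f : Heis n → ℝ} (hf : Nice f) (v : Heis n)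
    (ℓ : Heis n →L[ℝ] ℝ) (hℓ : ℓ (0,0,1) = 0) :
    ∫ p : Heis n, op v ℓ f p = 0 := by
  have hdf : Differentiable ℝ f := hf.1.differentiable (by norm_num)
  have hkey : ∀ p : Heis n, ℓ p * fderiv ℝ f p (0,0,1)
      = fderiv ℝ (fun q => ℓ q * f q) p ((0,0,1) : Heis n) := by
    intro p
    rw [fderiv_fun_mul (ℓ.differentiableAt) (hdf p)]
    simp [hℓ]
  have hnice : Nice (fun q : Heis n => ℓ q * f q) :=
    ⟨(ℓ.contDiff).mul hf.1, hf.2.mul_left⟩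
  have h1 : Nice (fun p : Heis n => fderiv ℝ f p v) := hf.fd v
  have h2 : Nice (fun p : Heis n => ℓ p * fderiv ℝ f p ((0,0,1):Heis n)) :=
    ⟨(ℓ.contDiff).mul (hf.fd _).1, (hf.fd ((0,0,1):Heis n)).2.mul_left⟩
  have : ∫ p : Heis n, op v ℓ f p
      = (∫ p : Heis n, fderiv ℝ f p v)
        + ∫ p : Heis n, ℓ p * fderiv ℝ f p ((0,0,1):Heis n) := by
    unfold op
    exact integral_add h1.integrable h2.integrable
  rw [this, integral_fd_zero hf.1 hf.2 v]
  have : ∫ p : Heis n, ℓ p * fderiv ℝ f p ((0,0,1):Heis n)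
      = ∫ p : Heis n, fderiv ℝ (fun q => ℓ q * f q) p ((0,0,1):Heis n) := by
    congr 1; ext p; exact hkey p
  rw [this, integral_fd_zero hnice.1 hnice.2]
  ring

lemma op_mul (v : Heis n) (ℓ : Heis n →L[ℝ] ℝ) {f g : Heis n → ℝ}
    (hf : ContDiff ℝ (⊤:ℕ∞) f) (hg : ContDiff ℝ (⊤:ℕ∞) g) (p : Heis n) :
    op v ℓ (fun q => f q * g q) p = op v ℓ f p * g p + f p * op v ℓ g p := by
  unfold op
  rw [fderiv_fun_mul ((hf.differentiable (by norm_num)) p) ((hg.differentiable (by norm_num)) p)]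
  simp only [ContinuousLinearMap.add_apply, ContinuousLinearMap.smul_apply, smul_eq_mul]
  ring

lemma op_ibp {f g : Heis n → ℝ} (hf : Nice f) (hg : Nice g) (v : Heis n)
    (ℓ : Heis n →L[ℝ] ℝ) (hℓ : ℓ (0,0,1) = 0) :
    ∫ p : Heis n, op v ℓ f p * g p = - ∫ p : Heis n, f p * op v ℓ g p := by
  have h0 : ∫ p : Heis n, op v ℓ (fun q => f q * g q) p = 0 :=
    op_integral_zero (hf.mul hg) v ℓ hℓ
  have h1 : ∀ p : Heis n, op v ℓ (fun q => f q * g q) p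
      = op v ℓ f p * g p + f p * op v ℓ g p := op_mul v ℓ hf.1 hg.1
  have i1 : Integrable (fun p : Heis n => op v ℓ f p * g p) :=
    ((hf.op v ℓ).mul hg).integrable
  have i2 : Integrable (fun p : Heis n => f p * op v ℓ g p) :=
    (hf.mul (hg.op v ℓ)).integrable
  have : (∫ p : Heis n, op v ℓ f p * g p) + (∫ p : Heis n, f p * op v ℓ g p) = 0 := by
    rw [← integral_add i1 i2]
    rw [← h0]
    congr 1; ext p; rw [h1 p]
  linarith [this]

lemma op_fderiv {f : Heis n → ℝ} (hf : ContDiff ℝ (⊤:ℕ∞) f) (w : Heis n)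
    (m : Heis n →L[ℝ] ℝ) (p : Heis n) :
    HasFDerivAt (op w m f)
      (((ContinuousLinearMap.apply ℝ ℝ w).comp (fderiv ℝ (fderiv ℝ f) p))
        + (m p • ((ContinuousLinearMap.apply ℝ ℝ ((0,0,1):Heis n)).comp
            (fderiv ℝ (fderiv ℝ f) p))
          + m.smulRight (fderiv ℝ f p ((0,0,1):Heis n)))) p := by
  have hF : ContDiff ℝ (⊤:ℕ∞) (fderiv ℝ f) := hf.fderiv_right (by exact_mod_cast le_top)
  have hFp : HasFDerivAt (fderiv ℝ f) (fderiv ℝ (fderiv ℝ f) p) p :=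
    ((hF.differentiable (by norm_num)) p).hasFDerivAt
  have h1 : HasFDerivAt (fun q : Heis n => fderiv ℝ f q w)
      ((ContinuousLinearMap.apply ℝ ℝ w).comp (fderiv ℝ (fderiv ℝ f) p)) p :=
    (ContinuousLinearMap.apply ℝ ℝ w).hasFDerivAt.comp p hFp
  have h2 : HasFDerivAt (fun q : Heis n => fderiv ℝ f q ((0,0,1):Heis n))
      ((ContinuousLinearMap.apply ℝ ℝ ((0,0,1):Heis n)).comp (fderiv ℝ (fderiv ℝ f) p)) p :=
    (ContinuousLinearMap.apply ℝ ℝ ((0,0,1):Heis n)).hasFDerivAt.comp p hFp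
  have h3 : HasFDerivAt (fun q : Heis n => m q * fderiv ℝ f q ((0,0,1):Heis n))
      (m p • ((ContinuousLinearMap.apply ℝ ℝ ((0,0,1):Heis n)).comp
          (fderiv ℝ (fderiv ℝ f) p))
        + m.smulRight (fderiv ℝ f p ((0,0,1):Heis n))) p :=
    (m.hasFDerivAt).mul' h2
  exact h1.add h3

lemma op_comm {f : Heis n → ℝ} (hf : ContDiff ℝ (⊤:ℕ∞) f) (v w : Heis n)
    (ℓ m : Heis n →L[ℝ] ℝ) (hℓ : ℓ (0,0,1) = 0) (hm : m (0,0,1) = 0) (p : Heis n) :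
    op v ℓ (op w m f) p - op w m (op v ℓ f) p
      = (m v - ℓ w) * fderiv ℝ f p ((0,0,1):Heis n) := by
  set F := fderiv ℝ f with hFdef
  set D := fderiv ℝ F p with hDdef
  have hF : ContDiff ℝ (⊤:ℕ∞) F := hf.fderiv_right (by exact_mod_cast le_top)
  have hasF : ∀ a, HasFDerivAt f (F a) a :=
    fun a => ((hf.differentiable (by norm_num)) a).hasFDerivAt
  have hFp : HasFDerivAt F D p := ((hF.differentiable (by norm_num)) p).hasFDerivAt
  have symm : ∀ a b : Heis n, D a b = D b a :=
    fun a b => second_derivative_symmetric hasF hFp a b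
  have e1 := (op_fderiv hf w m p).fderiv
  have e2 := (op_fderiv hf v ℓ p).fderiv
  have E1 : ∀ z : Heis n, fderiv ℝ (op w m f) p z
      = D z w + m p * D z ((0,0,1):Heis n) + F p ((0,0,1):Heis n) * m z := by
    intro z; rw [e1]; simp [smul_eq_mul]; ring
  have E2 : ∀ z : Heis n, fderiv ℝ (op v ℓ f) p z
      = D z v + ℓ p * D z ((0,0,1):Heis n) + F p ((0,0,1):Heis n) * ℓ z := by
    intro z; rw [e2]; simp [smul_eq_mul]; ring
  show (fderiv ℝ (op w m f) p v + ℓ p * fderiv ℝ (op w m f) p ((0,0,1):Heis n))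
      - (fderiv ℝ (op v ℓ f) p w + m p * fderiv ℝ (op v ℓ f) p ((0,0,1):Heis n))
      = (m v - ℓ w) * F p ((0,0,1):Heis n)
  rw [E1 v, E1 ((0,0,1):Heis n), E2 w, E2 ((0,0,1):Heis n), hℓ, hm,
    symm v w, symm v ((0,0,1):Heis n), symm w ((0,0,1):Heis n)]
  ring

lemma op_lin (v : Heis n) (ℓ : Heis n →L[ℝ] ℝ) {g h : Heis n → ℝ} (c : ℝ)
    (hg : ContDiff ℝ (⊤:ℕ∞) g) (hh : ContDiff ℝ (⊤:ℕ∞) h) (p : Heis n) :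
    op v ℓ (fun q => g q + c * h q) p = op v ℓ g p + c * op v ℓ h p := by
  unfold op
  have hd : fderiv ℝ (fun q => g q + c * h q) p
      = fderiv ℝ g p + c • fderiv ℝ h p := by
    rw [fderiv_fun_add ((hg.differentiable (by norm_num)) p)
      (((hh.differentiable (by norm_num)) p).const_mul c)]
    rw [fderiv_const_mul ((hh.differentiable (by norm_num)) p)]
  rw [hd]
  simp only [ContinuousLinearMap.add_apply, ContinuousLinearMap.smul_apply, smul_eq_mul]
  ring

/-- direction vector of `X_i` -/
def vv (n : ℕ) (i : Fin (2*n)) : Heis n :=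
  if h : (i:ℕ) < n then (Pi.single ⟨(i:ℕ),h⟩ 1, 0, 0)
  else (0, Pi.single ⟨(i:ℕ)-n, by have := i.isLt; omega⟩ 1, 0)

/-- coefficient functional of `X_i` -/
def ll (n : ℕ) (i : Fin (2*n)) : Heis n →L[ℝ] ℝ :=
  if h : (i:ℕ) < n then
    -(2⁻¹:ℝ) • ((ContinuousLinearMap.proj (⟨(i:ℕ),h⟩ : Fin n)).comp
      ((ContinuousLinearMap.fst ℝ (Fin n → ℝ) ℝ).comp
        (ContinuousLinearMap.snd ℝ (Fin n → ℝ) ((Fin n → ℝ) × ℝ))))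
  else (2⁻¹:ℝ) • ((ContinuousLinearMap.proj
      (⟨(i:ℕ)-n, by have := i.isLt; omega⟩ : Fin n)).comp
      (ContinuousLinearMap.fst ℝ (Fin n → ℝ) ((Fin n → ℝ) × ℝ)))

lemma ll_apply (i : Fin (2*n)) (p : Heis n) :
    ll n i p = if h : (i:ℕ) < n then -(p.2.1 ⟨(i:ℕ),h⟩)/2
      else p.1 ⟨(i:ℕ)-n, by have := i.isLt; omega⟩/2 := by
  unfold ll
  split_ifs with h <;> simp <;> ring

lemma ll_vert (i : Fin (2*n)) : ll n i ((0,0,1) : Heis n) = 0 := by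
  rw [ll_apply]; split_ifs <;> simp

lemma Xf_eq_op (i : Fin (2*n)) (f : Heis n → ℝ) :
    Xf n i f = op (vv n i) (ll n i) f := by
  funext p
  unfold Xf op vv
  rw [ll_apply]
  split_ifs with h <;> ring

lemma Tf_eq_op (f : Heis n → ℝ) : Tf n f = op ((0,0,1):Heis n) 0 f := by
  funext p
  unfold Tf op
  simp

/-- structure constants: `[X_i, X_j] = sg i j • T` -/
def sg (n : ℕ) (i j : Fin (2*n)) : ℝ := ll n j (vv n i) - ll n i (vv n j)

lemma sg_antisymm (i j : Fin (2*n)) : sg n j i = - sg n i j := by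
  unfold sg; ring

lemma sg_eq (i j : Fin (2*n)) :
    sg n i j = if (j:ℕ) = (i:ℕ) + n then 1 else if (i:ℕ) = (j:ℕ) + n then -1 else 0 := by
  have hi := i.isLt; have hj := j.isLt
  unfold sg vv
  rw [ll_apply, ll_apply]
  by_cases h1 : (i:ℕ) < n <;> by_cases h2 : (j:ℕ) < n <;>
    simp only [h1, h2, dite_true, dite_false, dif_pos, dif_neg, not_lt,
      Pi.single_apply, Fin.mk.injEq, Pi.zero_apply, Fin.ext_iff, Fin.val_mk] <;>
    split_ifs <;> (try ring) <;> (try omega) <;> (exfalso; omega)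

lemma Nice.X {f : Heis n → ℝ} (hf : Nice f) (i : Fin (2*n)) : Nice (Xf n i f) := by
  rw [Xf_eq_op]; exact hf.op _ _

lemma Nice.T {f : Heis n → ℝ} (hf : Nice f) : Nice (Tf n f) := by
  rw [Tf_eq_op]; exact hf.op _ _

lemma X_comm {f : Heis n → ℝ} (hf : ContDiff ℝ (⊤:ℕ∞) f) (i j : Fin (2*n)) (p : Heis n) :
    Xf n i (Xf n j f) p - Xf n j (Xf n i f) p = sg n i j * Tf n f p := by
  simp only [Xf_eq_op, Tf_eq_op, op]
  have := op_comm hf (vv n i) (vv n j) (ll n i) (ll n j) (ll_vert i) (ll_vert j) p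
  simp only [op] at this
  rw [this]
  simp [sg]

lemma T_X_comm {f : Heis n → ℝ} (hf : ContDiff ℝ (⊤:ℕ∞) f) (i : Fin (2*n)) (p : Heis n) :
    Tf n (Xf n i f) p = Xf n i (Tf n f) p := by
  simp only [Xf_eq_op, Tf_eq_op]
  have := op_comm hf ((0,0,1):Heis n) (vv n i) 0 (ll n i) (by simp) (ll_vert i) p
  simp only [ContinuousLinearMap.zero_apply, ll_vert, sub_zero, zero_mul, mul_zero] at this
  linarith [this]

/-- the index paired with `i` -/
def pr (n : ℕ) (i : Fin (2*n)) : Fin (2*n) :=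
  if h : (i:ℕ) < n then ⟨(i:ℕ)+n, by omega⟩
  else ⟨(i:ℕ)-n, by have := i.isLt; omega⟩

lemma sg_sq (i j : Fin (2*n)) : (sg n i j)^2 = if j = pr n i then 1 else 0 := by
  have hi := i.isLt; have hj := j.isLt
  rw [sg_eq]
  unfold pr
  by_cases h : (i:ℕ) < n <;>
    simp only [h, dite_true, dite_false, dif_pos, dif_neg, not_lt, Fin.ext_iff, Fin.val_mk] <;>
    split_ifs <;> (try norm_num) <;> omega

lemma sg_sq_sum : ∑ i : Fin (2*n), ∑ j : Fin (2*n), (sg n i j)^2 = 2*n := by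
  have : ∀ i : Fin (2*n), ∑ j : Fin (2*n), (sg n i j)^2 = 1 := by
    intro i
    simp_rw [sg_sq]
    rw [Finset.sum_ite_eq' Finset.univ (pr n i) (fun _ => (1:ℝ))]
    simp
  simp_rw [this]
  simp [mul_comm]

lemma X_ibp (i : Fin (2*n)) {f g : Heis n → ℝ} (hf : Nice f) (hg : Nice g) :
    ∫ p : Heis n, Xf n i f p * g p = - ∫ p : Heis n, f p * Xf n i g p := by
  simp only [Xf_eq_op]
  exact op_ibp hf hg _ _ (ll_vert i)

/-- For u ∈ C_c^∞(ℍⁿ):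
Σ_{i,j} ∫ (X_i X_j u)² = ∫ (Δ_H u)² + 2n ∫ (Tu)². -/
theorem heisenberg_global_unsym_hessian_identity (n : ℕ) (u : Heis n → ℝ)
    (hu : ContDiff ℝ (⊤ : ℕ∞) u) (hc : HasCompactSupport u) :
    ∑ i : Fin (2 * n), ∑ j : Fin (2 * n), ∫ p : Heis n, (Xf n i (Xf n j u) p) ^ 2
      = (∫ p : Heis n, (ΔH n u p) ^ 2)
        + 2 * n * ∫ p : Heis n, (Tf n u p) ^ 2 := by
  have nu : Nice u := ⟨hu, hc⟩
  have nT : Nice (Tf n u) := nu.T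
  have nXu : ∀ i, Nice (Xf n i u) := fun i => nu.X i
  have nA : ∀ i j, Nice (Xf n i (Xf n j u)) := fun i j => ((nu.X j).X i)
  -- the key pointwise identity X_i X_i X_j u = X_j X_i X_i u + 2 sg i j X_i T u
  have E2 : ∀ i j : Fin (2*n), ∀ p : Heis n,
      Xf n i (Xf n i (Xf n j u)) p
        = Xf n j (Xf n i (Xf n i u)) p + 2 * sg n i j * Xf n i (Tf n u) p := by
    intro i j p
    have h1 : Xf n i (Xf n j u) = fun q => Xf n j (Xf n i u) q + sg n i j * Tf n u q := by
      funext q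
      have := X_comm hu i j q
      linarith
    rw [h1]
    rw [show (fun q => Xf n j (Xf n i u) q + sg n i j * Tf n u q)
      = fun q => Xf n j (Xf n i u) q + sg n i j * Tf n u q from rfl]
    have hlin := by
      simpa only [← Xf_eq_op] using
        op_lin (vv n i) (ll n i) (sg n i j) ((nXu i).X j).1 nT.1 p
    rw [show Xf n i (fun q => Xf n j (Xf n i u) q + sg n i j * Tf n u q) p
        = Xf n i (Xf n j (Xf n i u)) p + sg n i j * Xf n i (Tf n u) p from hlin]
    have h2 := X_comm (nXu i).1 i j p
    have h3 := T_X_comm hu i p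
    rw [h3] at h2
    linarith
  -- per-pair integral identity
  have step : ∀ i j : Fin (2*n),
      ∫ p : Heis n, (Xf n i (Xf n j u) p)^2
        = (∫ p : Heis n, Xf n j (Xf n j u) p * Xf n i (Xf n i u) p)
          + 2 * sg n i j * ∫ p : Heis n, Xf n i (Xf n j u) p * Tf n u p := by
    intro i j
    have e1 : ∫ p : Heis n, (Xf n i (Xf n j u) p)^2
        = - ∫ p : Heis n, Xf n j u p * Xf n i (Xf n i (Xf n j u)) p := by
      rw [show (fun p : Heis n => (Xf n i (Xf n j u) p)^2)
          = fun p : Heis n => Xf n i (Xf n j u) p * Xf n i (Xf n j u) p by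
        funext p; ring]
      exact X_ibp i (nXu j) (nA i j)
    rw [e1]
    rw [show (fun p : Heis n => Xf n j u p * Xf n i (Xf n i (Xf n j u)) p)
        = fun p : Heis n => Xf n j u p * Xf n j (Xf n i (Xf n i u)) p
            + 2 * sg n i j * (Xf n j u p * Xf n i (Tf n u) p) by
      funext p; rw [E2 i j p]; ring]
    rw [integral_add ((nXu j).mul ((nA i i).X j)).integrable
      (((nXu j).mul (nT.X i)).integrable.const_mul _), integral_const_mul]
    have e3 : ∫ p : Heis n, Xf n j u p * Xf n j (Xf n i (Xf n i u)) p
        = - ∫ p : Heis n, Xf n j (Xf n j u) p * Xf n i (Xf n i u) p := by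
      have := X_ibp j (nXu j) (nA i i)
      linarith
    have e4 : ∫ p : Heis n, Xf n j u p * Xf n i (Tf n u) p
        = - ∫ p : Heis n, Xf n i (Xf n j u) p * Tf n u p := by
      have := X_ibp i (nXu j) nT
      linarith
    rw [e3, e4]
    ring
  -- sum it up
  simp_rw [step]
  have hsplit : ∑ i : Fin (2*n), ∑ j : Fin (2*n),
      ((∫ p : Heis n, Xf n j (Xf n j u) p * Xf n i (Xf n i u) p)
        + 2 * sg n i j * ∫ p : Heis n, Xf n i (Xf n j u) p * Tf n u p)
      = (∑ i : Fin (2*n), ∑ j : Fin (2*n),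
          ∫ p : Heis n, Xf n j (Xf n j u) p * Xf n i (Xf n i u) p)
        + ∑ i : Fin (2*n), ∑ j : Fin (2*n),
          2 * sg n i j * ∫ p : Heis n, Xf n i (Xf n j u) p * Tf n u p := by
    simp_rw [Finset.sum_add_distrib]
  rw [hsplit]
  -- first double sum is ∫ (ΔH u)²
  have claim1 : (∑ i : Fin (2*n), ∑ j : Fin (2*n),
      ∫ p : Heis n, Xf n j (Xf n j u) p * Xf n i (Xf n i u) p)
      = ∫ p : Heis n, (ΔH n u p)^2 := by
    have hΔ : (fun p : Heis n => (ΔH n u p)^2)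
        = fun p : Heis n => ∑ i : Fin (2*n), ∑ j : Fin (2*n),
            Xf n i (Xf n i u) p * Xf n j (Xf n j u) p := by
      funext p
      rw [ΔH, pow_two, Finset.sum_mul_sum]
    rw [hΔ]
    rw [integral_finset_sum _ (fun i _ => integrable_finset_sum _
      (fun j _ => ((nA i i).mul (nA j j)).integrable))]
    rw [Finset.sum_congr rfl (fun i _ => integral_finset_sum _
      (fun j _ => ((nA i i).mul (nA j j)).integrable))]
    rw [Finset.sum_comm]
  rw [claim1]
  -- second double sum is 2n ∫ (Tu)²
  have key : ∀ i j : Fin (2*n),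
      (∫ p : Heis n, Xf n i (Xf n j u) p * Tf n u p)
        - (∫ p : Heis n, Xf n j (Xf n i u) p * Tf n u p)
      = sg n i j * ∫ p : Heis n, (Tf n u p)^2 := by
    intro i j
    rw [← integral_sub ((nA i j).mul nT).integrable ((nA j i).mul nT).integrable]
    rw [show (fun p : Heis n => Xf n i (Xf n j u) p * Tf n u p
          - Xf n j (Xf n i u) p * Tf n u p)
        = fun p : Heis n => sg n i j * (Tf n u p)^2 by
      funext p
      have := X_comm hu i j p
      linear_combination Tf n u p * this]
    exact integral_const_mul _ _
  have swap : (∑ i : Fin (2*n), ∑ j : Fin (2*n),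
        sg n i j * ∫ p : Heis n, Xf n i (Xf n j u) p * Tf n u p)
      = ∑ i : Fin (2*n), ∑ j : Fin (2*n),
        (- sg n i j) * ∫ p : Heis n, Xf n j (Xf n i u) p * Tf n u p := by
    rw [Finset.sum_comm]
    apply Finset.sum_congr rfl; intro i _
    apply Finset.sum_congr rfl; intro j _
    rw [sg_antisymm]
  have S2 : (∑ i : Fin (2*n), ∑ j : Fin (2*n),
        sg n i j * ∫ p : Heis n, Xf n i (Xf n j u) p * Tf n u p)
      = n * ∫ p : Heis n, (Tf n u p)^2 := by
    have hdbl : (∑ i : Fin (2*n), ∑ j : Fin (2*n),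
          sg n i j * ∫ p : Heis n, Xf n i (Xf n j u) p * Tf n u p)
        + (∑ i : Fin (2*n), ∑ j : Fin (2*n),
          sg n i j * ∫ p : Heis n, Xf n i (Xf n j u) p * Tf n u p)
        = ∑ i : Fin (2*n), ∑ j : Fin (2*n),
          (sg n i j)^2 * ∫ p : Heis n, (Tf n u p)^2 := by
      nth_rewrite 2 [swap]
      simp_rw [← Finset.sum_add_distrib]
      apply Finset.sum_congr rfl; intro i _
      apply Finset.sum_congr rfl; intro j _
      have := key i j
      linear_combination sg n i j * this
    have hsum : ∑ i : Fin (2*n), ∑ j : Fin (2*n),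
        (sg n i j)^2 * ∫ p : Heis n, (Tf n u p)^2
        = (2*n : ℝ) * ∫ p : Heis n, (Tf n u p)^2 := by
      simp_rw [← Finset.sum_mul]
      rw [sg_sq_sum]
    rw [hsum] at hdbl
    push_cast at hdbl ⊢
    linarith
  have : (∑ i : Fin (2*n), ∑ j : Fin (2*n),
      2 * sg n i j * ∫ p : Heis n, Xf n i (Xf n j u) p * Tf n u p)
      = 2 * (n * ∫ p : Heis n, (Tf n u p)^2) := by
    rw [← S2, Finset.mul_sum]
    apply Finset.sum_congr rfl; intro i _
    rw [Finset.mul_sum]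
    apply Finset.sum_congr rfl; intro j _
    ring
  rw [this]
  push_cast
  ring
end
end

section
/- Let u ∈ C_c^∞(ℝ³) be a smooth compactly supported function on the first Heisenberg group ℍ¹. Then ∫_{ℝ³} det(∇²_H u) dg + (3/4) ∫_{ℝ³} (Tu)² dg = 0, where det(∇²_H u) = u_{,11} u_{,22} − u_{,12}² is the determinant of the 2×2 symmetrized horizontal Hessian and dg denotes Lebesgue measure. -/
open scoped BigOperators
noncomputable section

namespace HeisAux

open MeasureTheory

abbrev E3 : Type := Heis 1

def e1 : E3 := (Pi.single 0 1, 0, 0)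
def e2 : E3 := (0, Pi.single 0 1, 0)
def e3 : E3 := (0, 0, 1)

/-- directional derivative -/
noncomputable def D (v : E3) (f : E3 → ℝ) (p : E3) : ℝ := fderiv ℝ f p v

variable {u f g : E3 → ℝ} {v w : E3} {p : E3}

@[fun_prop]
theorem contDiff_D (v : E3) (hf : ContDiff ℝ (⊤:ℕ∞) f) : ContDiff ℝ (⊤:ℕ∞) (D v f) :=
  (hf.fderiv_right (by exact_mod_cast le_top)).clm_apply contDiff_const

@[fun_prop]
theorem differentiable_D (v : E3) (hf : ContDiff ℝ (⊤:ℕ∞) f) : Differentiable ℝ (D v f) :=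
  (contDiff_D v hf).differentiable (by simp)

theorem hcs_D (v : E3) (hc : HasCompactSupport f) : HasCompactSupport (D v f) :=
  hc.fderiv_apply ℝ v

theorem D_comm (hf : ContDiff ℝ (⊤:ℕ∞) f) (v w : E3) (p : E3) :
    D v (D w f) p = D w (D v f) p := by
  have hd : Differentiable ℝ f := hf.differentiable (by simp)
  have h2 : DifferentiableAt ℝ (fderiv ℝ f) p :=
    ((hf.fderiv_right (m := ((⊤:ℕ∞) : WithTop ℕ∞)) (by exact_mod_cast le_top)).differentiable
      (by simp)) p
  have key : ∀ a b : E3, D a (D b f) p = fderiv ℝ (fderiv ℝ f) p a b := by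
    intro a b
    have h3 : D b f = fun q => (fderiv ℝ f q) b := rfl
    rw [D, h3, fderiv_clm_apply h2 (differentiableAt_const _)]
    simp
  rw [key, key]
  exact second_derivative_symmetric_of_eventually
    (Filter.Eventually.of_forall fun y => (hd y).hasFDerivAt) h2.hasFDerivAt v w

theorem D_comm' (hf : ContDiff ℝ (⊤:ℕ∞) f) (v w : E3) : D v (D w f) = D w (D v f) :=
  funext fun p => D_comm hf v w p

theorem D_add (hf : DifferentiableAt ℝ f p) (hg : DifferentiableAt ℝ g p) :
    D v (fun q => f q + g q) p = D v f p + D v g p := by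
  simp [D, fderiv_fun_add hf hg]

theorem D_sub (hf : DifferentiableAt ℝ f p) (hg : DifferentiableAt ℝ g p) :
    D v (fun q => f q - g q) p = D v f p - D v g p := by
  simp [D, fderiv_fun_sub hf hg]

theorem D_mul (hf : DifferentiableAt ℝ f p) (hg : DifferentiableAt ℝ g p) :
    D v (fun q => f q * g q) p = D v f p * g p + f p * D v g p := by
  simp [D, fderiv_fun_mul hf hg]; ring

theorem D_const (c : ℝ) : D v (fun _ : E3 => c) p = 0 := by
  simp [D]

theorem D_const_mul (hg : DifferentiableAt ℝ g p) (c : ℝ) :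
    D v (fun q => c * g q) p = c * D v g p := by
  simp [D, fderiv_const_mul hg c]

def CX : E3 →L[ℝ] ℝ :=
  (ContinuousLinearMap.proj 0).comp (ContinuousLinearMap.fst ℝ (Fin 1 → ℝ) ((Fin 1 → ℝ) × ℝ))

def CY : E3 →L[ℝ] ℝ :=
  (ContinuousLinearMap.proj 0).comp ((ContinuousLinearMap.fst ℝ (Fin 1 → ℝ) ℝ).comp
    (ContinuousLinearMap.snd ℝ (Fin 1 → ℝ) ((Fin 1 → ℝ) × ℝ)))

theorem D_CX (v p : E3) : D v (fun q : E3 => q.1 0) p = v.1 0 := by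
  have h : (fun q : E3 => q.1 0) = ⇑CX := rfl
  rw [D, h, CX.fderiv]; rfl

theorem D_CY (v p : E3) : D v (fun q : E3 => q.2.1 0) p = v.2.1 0 := by
  have h : (fun q : E3 => q.2.1 0) = ⇑CY := rfl
  rw [D, h, CY.fderiv]; rfl

@[simp] theorem e1x : (e1).1 0 = (1:ℝ) := by simp [e1]
@[simp] theorem e1y : (e1).2.1 0 = (0:ℝ) := by simp [e1]
@[simp] theorem e2x : (e2).1 0 = (0:ℝ) := by simp [e2]
@[simp] theorem e2y : (e2).2.1 0 = (1:ℝ) := by simp [e2]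
@[simp] theorem e3x : (e3).1 0 = (0:ℝ) := by simp [e3]
@[simp] theorem e3y : (e3).2.1 0 = (0:ℝ) := by simp [e3]

/-! ### Integration -/

instance : (volume : Measure ((Fin 1 → ℝ) × ℝ)).IsAddHaarMeasure :=
  Measure.prod.instIsAddHaarMeasure _ _
instance : (volume : Measure E3).IsAddHaarMeasure :=
  Measure.prod.instIsAddHaarMeasure _ _

theorem integrable_cc (hf : Continuous f) (hc : HasCompactSupport f) :
    Integrable f (volume : Measure E3) := hf.integrable_of_hasCompactSupport hc

theorem integral_D_eq_zero (hf : ContDiff ℝ (⊤:ℕ∞) f) (hc : HasCompactSupport f)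
    (v : E3) : ∫ p : E3, D v f p = 0 := by
  have hdf : Differentiable ℝ f := hf.differentiable (by simp)
  have hcont : Continuous (D v f) := (contDiff_D v hf).continuous
  have h1 : Integrable (fun p : E3 => fderiv ℝ f p v * 1) volume := by
    simpa using (integrable_cc hcont (hcs_D v hc) :
      Integrable (fun p : E3 => fderiv ℝ f p v) volume)
  have h2 : Integrable (fun p : E3 => f p * fderiv ℝ (fun _ : E3 => (1:ℝ)) p v) volume := by
    simpa [fderiv_fun_const] using (integrable_zero _ _ (volume : Measure E3))
  have h3 : Integrable (fun p : E3 => f p * 1) volume := by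
    simpa using integrable_cc hf.continuous hc
  have := integral_mul_fderiv_eq_neg_fderiv_mul_of_integrable h1 h2 h3 (fun x _ => hdf x)
    (fun x _ => differentiable_const (1:ℝ) x) (v := v)
  simp [fderiv_fun_const] at this
  simpa [D] using this

/-! ### The horizontal vector fields as operators -/

noncomputable def XO (f : E3 → ℝ) (p : E3) : ℝ := D e1 f p - p.2.1 0 / 2 * D e3 f p
noncomputable def YO (f : E3 → ℝ) (p : E3) : ℝ := D e2 f p + p.1 0 / 2 * D e3 f p

@[fun_prop]
theorem contDiff_XO (hf : ContDiff ℝ (⊤:ℕ∞) f) : ContDiff ℝ (⊤:ℕ∞) (XO f) := by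
  unfold XO; fun_prop (disch := norm_num)

@[fun_prop]
theorem contDiff_YO (hf : ContDiff ℝ (⊤:ℕ∞) f) : ContDiff ℝ (⊤:ℕ∞) (YO f) := by
  unfold YO; fun_prop (disch := norm_num)

theorem D_XO (hf : ContDiff ℝ (⊤:ℕ∞) f) (v p : E3) :
    D v (XO f) p = D v (D e1 f) p - v.2.1 0 / 2 * D e3 f p
      - p.2.1 0 / 2 * D v (D e3 f) p := by
  have h1 : XO f = fun q => D e1 f q - (fun q : E3 => q.2.1 0) q * (2⁻¹ * D e3 f q) := by
    funext q; simp [XO]; ring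
  rw [h1, D_sub (by fun_prop) (by fun_prop), D_mul (by fun_prop) (by fun_prop),
    D_const_mul (by fun_prop), D_CY]
  ring

theorem D_YO (hf : ContDiff ℝ (⊤:ℕ∞) f) (v p : E3) :
    D v (YO f) p = D v (D e2 f) p + v.1 0 / 2 * D e3 f p
      + p.1 0 / 2 * D v (D e3 f) p := by
  have h1 : YO f = fun q => D e2 f q + (fun q : E3 => q.1 0) q * (2⁻¹ * D e3 f q) := by
    funext q; simp [YO]; ring
  rw [h1, D_add (by fun_prop) (by fun_prop), D_mul (by fun_prop) (by fun_prop),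
    D_const_mul (by fun_prop), D_CX]
  ring

theorem XX_eq (hu : ContDiff ℝ (⊤:ℕ∞) u) (p : E3) :
    XO (XO u) p = D e1 (D e1 u) p - p.2.1 0 * D e1 (D e3 u) p
      + p.2.1 0 ^ 2 / 4 * D e3 (D e3 u) p := by
  rw [show XO (XO u) p = D e1 (XO u) p - p.2.1 0 / 2 * D e3 (XO u) p from rfl,
    D_XO hu e1 p, D_XO hu e3 p, D_comm hu e3 e1 p]
  simp only [e1x, e1y, e3x, e3y]
  ring

theorem YY_eq (hu : ContDiff ℝ (⊤:ℕ∞) u) (p : E3) :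
    YO (YO u) p = D e2 (D e2 u) p + p.1 0 * D e2 (D e3 u) p
      + p.1 0 ^ 2 / 4 * D e3 (D e3 u) p := by
  rw [show YO (YO u) p = D e2 (YO u) p + p.1 0 / 2 * D e3 (YO u) p from rfl,
    D_YO hu e2 p, D_YO hu e3 p, D_comm hu e3 e2 p]
  simp only [e2x, e2y, e3x, e3y]
  ring

theorem XY_eq (hu : ContDiff ℝ (⊤:ℕ∞) u) (p : E3) :
    XO (YO u) p = D e1 (D e2 u) p + (1/2) * D e3 u p
      + p.1 0 / 2 * D e1 (D e3 u) p - p.2.1 0 / 2 * D e2 (D e3 u) p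
      - p.1 0 * p.2.1 0 / 4 * D e3 (D e3 u) p := by
  rw [show XO (YO u) p = D e1 (YO u) p - p.2.1 0 / 2 * D e3 (YO u) p from rfl,
    D_YO hu e1 p, D_YO hu e3 p, D_comm hu e3 e2 p]
  simp only [e1x, e1y, e3x, e3y]
  ring

theorem YX_eq (hu : ContDiff ℝ (⊤:ℕ∞) u) (p : E3) :
    YO (XO u) p = D e1 (D e2 u) p - (1/2) * D e3 u p
      + p.1 0 / 2 * D e1 (D e3 u) p - p.2.1 0 / 2 * D e2 (D e3 u) p
      - p.1 0 * p.2.1 0 / 4 * D e3 (D e3 u) p := by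
  rw [show YO (XO u) p = D e2 (XO u) p + p.1 0 / 2 * D e3 (XO u) p from rfl,
    D_XO hu e2 p, D_XO hu e3 p, D_comm hu e3 e1 p, D_comm hu e2 e1 p]
  simp only [e2x, e2y, e3x, e3y]
  ring

/-! ### The divergence field -/

noncomputable def V1 (u : E3 → ℝ) (q : E3) : ℝ :=
  D e1 u q * D e2 (D e2 u) q + q.1 0 * (D e1 u q * D e2 (D e3 u) q)
    + (1/4 : ℝ) * (q.1 0 * (q.1 0 * (D e1 u q * D e3 (D e3 u) q)))
    + D e2 u q * D e3 u q + (1/2 : ℝ) * (q.1 0 * (D e3 u q * D e3 u q))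

noncomputable def V2 (u : E3 → ℝ) (q : E3) : ℝ :=
  (-1 : ℝ) * (D e1 u q * D e1 (D e2 u) q) + q.2.1 0 * (D e1 u q * D e2 (D e3 u) q)
    + (1/4 : ℝ) * (q.2.1 0 * (q.2.1 0 * (D e2 u q * D e3 (D e3 u) q)))
    + (1/2 : ℝ) * (q.1 0 * (q.2.1 0 * (D e1 u q * D e3 (D e3 u) q)))
    + (-1 : ℝ) * (D e1 u q * D e3 u q)
    + (1/4 : ℝ) * (q.2.1 0 * (D e3 u q * D e3 u q))

noncomputable def V3 (u : E3 → ℝ) (q : E3) : ℝ :=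
  (-1 : ℝ) * (q.1 0 * (D e1 u q * D e1 (D e2 u) q))
    + (-1 : ℝ) * (q.2.1 0 * (D e1 u q * D e2 (D e2 u) q))
    + (-1/4 : ℝ) * (q.1 0 * (q.1 0 * (D e1 u q * D e1 (D e3 u) q)))
    + (-1/4 : ℝ) * (q.2.1 0 * (q.2.1 0 * (D e2 u q * D e2 (D e3 u) q)))
    + (-1/2 : ℝ) * (q.1 0 * (q.2.1 0 * (D e1 u q * D e2 (D e3 u) q)))
    + (-1 : ℝ) * (D e1 u q * D e2 u q)
    + (-1 : ℝ) * (q.1 0 * (D e1 u q * D e3 u q))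
    + (-1/2 : ℝ) * (q.2.1 0 * (D e2 u q * D e3 u q))

theorem key (hu : ContDiff ℝ (⊤:ℕ∞) u) (p : E3) :
    XO (XO u) p * YO (YO u) p - ((XO (YO u) p + YO (XO u) p) / 2) ^ 2
      = D e1 (V1 u) p + D e2 (V2 u) p + D e3 (V3 u) p - (3/4) * (D e3 u p) ^ 2 := by
  rw [XX_eq hu p, YY_eq hu p, XY_eq hu p, YX_eq hu p]
  have hV1 : V1 u = fun q => D e1 u q * D e2 (D e2 u) q
      + (fun q : E3 => q.1 0) q * (D e1 u q * D e2 (D e3 u) q)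
      + (1/4 : ℝ) * ((fun q : E3 => q.1 0) q * ((fun q : E3 => q.1 0) q
          * (D e1 u q * D e3 (D e3 u) q)))
      + D e2 u q * D e3 u q
      + (1/2 : ℝ) * ((fun q : E3 => q.1 0) q * (D e3 u q * D e3 u q)) := rfl
  have hV2 : V2 u = fun q => (-1 : ℝ) * (D e1 u q * D e1 (D e2 u) q)
      + (fun q : E3 => q.2.1 0) q * (D e1 u q * D e2 (D e3 u) q)
      + (1/4 : ℝ) * ((fun q : E3 => q.2.1 0) q * ((fun q : E3 => q.2.1 0) q
          * (D e2 u q * D e3 (D e3 u) q)))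
      + (1/2 : ℝ) * ((fun q : E3 => q.1 0) q * ((fun q : E3 => q.2.1 0) q
          * (D e1 u q * D e3 (D e3 u) q)))
      + (-1 : ℝ) * (D e1 u q * D e3 u q)
      + (1/4 : ℝ) * ((fun q : E3 => q.2.1 0) q * (D e3 u q * D e3 u q)) := rfl
  have hV3 : V3 u = fun q => (-1 : ℝ) * ((fun q : E3 => q.1 0) q * (D e1 u q * D e1 (D e2 u) q))
      + (-1 : ℝ) * ((fun q : E3 => q.2.1 0) q * (D e1 u q * D e2 (D e2 u) q))
      + (-1/4 : ℝ) * ((fun q : E3 => q.1 0) q * ((fun q : E3 => q.1 0) q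
          * (D e1 u q * D e1 (D e3 u) q)))
      + (-1/4 : ℝ) * ((fun q : E3 => q.2.1 0) q * ((fun q : E3 => q.2.1 0) q
          * (D e2 u q * D e2 (D e3 u) q)))
      + (-1/2 : ℝ) * ((fun q : E3 => q.1 0) q * ((fun q : E3 => q.2.1 0) q
          * (D e1 u q * D e2 (D e3 u) q)))
      + (-1 : ℝ) * (D e1 u q * D e2 u q)
      + (-1 : ℝ) * ((fun q : E3 => q.1 0) q * (D e1 u q * D e3 u q))
      + (-1/2 : ℝ) * ((fun q : E3 => q.2.1 0) q * (D e2 u q * D e3 u q)) := rfl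
  rw [hV1, hV2, hV3]
  simp (disch := fun_prop) only [D_add, D_mul, D_const_mul, D_const, D_CX, D_CY,
    e1x, e1y, e2x, e2y, e3x, e3y]
  simp only [D_comm' (contDiff_D e2 hu) e2 e1, D_comm' (contDiff_D e2 hu) e3 e1,
    D_comm' (contDiff_D e2 hu) e3 e2, D_comm' (contDiff_D e3 hu) e3 e1,
    D_comm' (contDiff_D e3 hu) e3 e2, D_comm' hu e2 e1, D_comm' hu e3 e1, D_comm' hu e3 e2]
  ring

/-! ### Support lemmas -/

theorem D_eq_zero {x : E3} (hx : x ∉ tsupport f) (v : E3) : D v f x = 0 := by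
  rw [D, fderiv_of_notMem_tsupport (𝕜 := ℝ) hx]; rfl

theorem tsupport_D_subset (v : E3) : tsupport (D v f) ⊆ tsupport f := by
  apply closure_minimal _ (isClosed_closure)
  intro x hx
  by_contra hxx
  exact hx (by simp [D_eq_zero hxx v] : D v f x = 0) |>.elim

theorem hcs_V1 (hc : HasCompactSupport u) : HasCompactSupport (V1 u) := by
  apply HasCompactSupport.intro hc
  intro x hx
  have h0 : ∀ v, D v u x = 0 := fun v => D_eq_zero hx v
  have h00 : ∀ v w, D v (D w u) x = 0 := fun v w =>
    D_eq_zero (fun hmem => hx (tsupport_D_subset w hmem)) v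
  simp [V1, h0, h00]

theorem hcs_V2 (hc : HasCompactSupport u) : HasCompactSupport (V2 u) := by
  apply HasCompactSupport.intro hc
  intro x hx
  have h0 : ∀ v, D v u x = 0 := fun v => D_eq_zero hx v
  have h00 : ∀ v w, D v (D w u) x = 0 := fun v w =>
    D_eq_zero (fun hmem => hx (tsupport_D_subset w hmem)) v
  simp [V2, h0, h00]

theorem hcs_V3 (hc : HasCompactSupport u) : HasCompactSupport (V3 u) := by
  apply HasCompactSupport.intro hc
  intro x hx
  have h0 : ∀ v, D v u x = 0 := fun v => D_eq_zero hx v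
  have h00 : ∀ v w, D v (D w u) x = 0 := fun v w =>
    D_eq_zero (fun hmem => hx (tsupport_D_subset w hmem)) v
  simp [V3, h0, h00]

theorem contDiff_V1 (hu : ContDiff ℝ (⊤:ℕ∞) u) : ContDiff ℝ (⊤:ℕ∞) (V1 u) := by
  unfold V1; fun_prop
theorem contDiff_V2 (hu : ContDiff ℝ (⊤:ℕ∞) u) : ContDiff ℝ (⊤:ℕ∞) (V2 u) := by
  unfold V2; fun_prop
theorem contDiff_V3 (hu : ContDiff ℝ (⊤:ℕ∞) u) : ContDiff ℝ (⊤:ℕ∞) (V3 u) := by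
  unfold V3; fun_prop

/-! ### Bridge to `Xf`, `Tf` -/

theorem Xf0 (f : E3 → ℝ) (h : (0:ℕ) < 2*1) : Xf 1 ⟨0, h⟩ f = XO f := by
  funext p
  rw [Xf, dif_pos (by norm_num : ((⟨0,h⟩ : Fin (2*1)) : ℕ) < 1)]
  rfl

theorem Xf1 (f : E3 → ℝ) (h : (1:ℕ) < 2*1) : Xf 1 ⟨1, h⟩ f = YO f := by
  funext p
  rw [Xf, dif_neg (by norm_num : ¬ ((⟨1,h⟩ : Fin (2*1)) : ℕ) < 1)]
  rfl

theorem Tf_eq (u : E3 → ℝ) : Tf 1 u = D e3 u := rfl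

end HeisAux

open HeisAux MeasureTheory

/-- For u ∈ C_c^∞(ℍ¹): ∫ det(∇²_H u) + (3/4) ∫ (Tu)² = 0. -/
theorem heisenberg1_monge_ampere_identity (u : Heis 1 → ℝ)
    (hu : ContDiff ℝ (⊤ : ℕ∞) u) (hc : HasCompactSupport u) :
    (∫ p : Heis 1,
        (((Xf 1 ⟨0, by omega⟩ (Xf 1 ⟨0, by omega⟩ u) p
            + Xf 1 ⟨0, by omega⟩ (Xf 1 ⟨0, by omega⟩ u) p) / 2)
          * ((Xf 1 ⟨1, by omega⟩ (Xf 1 ⟨1, by omega⟩ u) p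
            + Xf 1 ⟨1, by omega⟩ (Xf 1 ⟨1, by omega⟩ u) p) / 2)
        - ((Xf 1 ⟨0, by omega⟩ (Xf 1 ⟨1, by omega⟩ u) p
            + Xf 1 ⟨1, by omega⟩ (Xf 1 ⟨0, by omega⟩ u) p) / 2) ^ 2))
      + (3 / 4) * ∫ p : Heis 1, (Tf 1 u p) ^ 2 = 0 := by
  simp only [Xf0, Xf1, Tf_eq]
  have hhalf : ∀ a : ℝ, (a + a) / 2 = a := fun a => by ring
  simp only [hhalf]
  -- integrabilities
  have hI1 : Integrable (D e1 (V1 u)) (volume : Measure E3) :=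
    integrable_cc (contDiff_D e1 (contDiff_V1 hu)).continuous (hcs_D e1 (hcs_V1 hc))
  have hI2 : Integrable (D e2 (V2 u)) (volume : Measure E3) :=
    integrable_cc (contDiff_D e2 (contDiff_V2 hu)).continuous (hcs_D e2 (hcs_V2 hc))
  have hI3 : Integrable (D e3 (V3 u)) (volume : Measure E3) :=
    integrable_cc (contDiff_D e3 (contDiff_V3 hu)).continuous (hcs_D e3 (hcs_V3 hc))
  have hI12 : Integrable (fun p : E3 => D e1 (V1 u) p + D e2 (V2 u) p) volume := hI1.add hI2
  have hI123 : Integrable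
      (fun p : E3 => D e1 (V1 u) p + D e2 (V2 u) p + D e3 (V3 u) p) volume := hI12.add hI3
  have hsq : Integrable (fun p : E3 => (D e3 u p) ^ 2) volume := by
    apply integrable_cc
    · have := (contDiff_D e3 hu).continuous; fun_prop
    · have h1 : HasCompactSupport (fun p : E3 => D e3 u p * D e3 u p) :=
        (hcs_D e3 hc).mul_right
      have h2 : (fun p : E3 => (D e3 u p) ^ 2) = fun p : E3 => D e3 u p * D e3 u p := by
        funext p; ring
      rw [h2]; exact h1
  have hsq' : Integrable (fun p : E3 => (3/4 : ℝ) * (D e3 u p) ^ 2) volume := hsq.const_mul _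
  -- main rewrite
  have hmain : (∫ p : E3, (XO (XO u) p * YO (YO u) p
      - ((XO (YO u) p + YO (XO u) p) / 2) ^ 2))
      = - ((3/4 : ℝ) * ∫ p : E3, (D e3 u p) ^ 2) := by
    calc ∫ p : E3, (XO (XO u) p * YO (YO u) p - ((XO (YO u) p + YO (XO u) p) / 2) ^ 2)
        = ∫ p : E3, (D e1 (V1 u) p + D e2 (V2 u) p + D e3 (V3 u) p
            - (3/4 : ℝ) * (D e3 u p) ^ 2) := by simp only [key hu]
      _ = (∫ p : E3, (D e1 (V1 u) p + D e2 (V2 u) p + D e3 (V3 u) p))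
            - ∫ p : E3, (3/4 : ℝ) * (D e3 u p) ^ 2 := integral_sub hI123 hsq'
      _ = - ((3/4 : ℝ) * ∫ p : E3, (D e3 u p) ^ 2) := by
          rw [integral_add hI12 hI3, integral_add hI1 hI2,
            integral_D_eq_zero (contDiff_V1 hu) (hcs_V1 hc) e1,
            integral_D_eq_zero (contDiff_V2 hu) (hcs_V2 hc) e2,
            integral_D_eq_zero (contDiff_V3 hu) (hcs_V3 hc) e3,
            integral_const_mul]
          ring
  rw [hmain]
  ring
end
end
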